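/- Fix integers m and n with 2 ≤ m ≤ n−2. For each integer j with m ≤ j ≤ n−2 define γ_j := ((m−1)/2) · 1/(j(j−1)) · ∏_{i=m}^{j} (2i)/(2i+1), and for m−1 ≤ j ≤ n−2 define σ_j := Σ_{i=m}^{j} γ_i (so σ_{m−1} = 0). Then for every integer j with m ≤ j ≤ n−1 one has (j−1)(1 − σ_{j−1}) = (2(j−1) + (m−1)·∏_{i=m}^{j−1} (2i)/(2i+1))/3, where the empty product (when j = m) equals 1. -/

import Mathlib

/-- Closed form `(j−1)(1 − σ_{j−1}) = (2(j−1) + (m−1)·∏_{i=m}^{j−1} (2i)/(2i+1))/3` for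
`γ_j = ((m−1)/2) · 1/(j(j−1)) · ∏_{i=m}^{j} (2i)/(2i+1)` and `σ_j = Σ_{i=m}^{j} γ_i`. -/
theorem statement9 (m n : ℕ) (hm : 2 ≤ m) (hmn : m ≤ n - 2)
    (γ : ℕ → ℝ)
    (hγ : ∀ j, m ≤ j → j ≤ n - 2 →
      γ j = ((m : ℝ) - 1) / 2 * (1 / ((j : ℝ) * ((j : ℝ) - 1))) *
        ∏ i ∈ Finset.Icc m j, (2 * (i : ℝ)) / (2 * (i : ℝ) + 1))
    (σ : ℕ → ℝ)
    (hσ : ∀ j, m - 1 ≤ j → j ≤ n - 2 → σ j = ∑ i ∈ Finset.Icc m j, γ i)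
    (j : ℕ) (hj1 : m ≤ j) (hj2 : j ≤ n - 1) :
    ((j : ℝ) - 1) * (1 - σ (j - 1)) =
      (2 * ((j : ℝ) - 1) +
        ((m : ℝ) - 1) * ∏ i ∈ Finset.Icc m (j - 1), (2 * (i : ℝ)) / (2 * (i : ℝ) + 1)) / 3 := by
  induction j, hj1 using Nat.le_induction with
  | base =>
    have h0 : σ (m - 1) = 0 := by
      rw [hσ (m - 1) le_rfl (by omega), Finset.Icc_eq_empty (by omega), Finset.sum_empty]
    rw [h0, Finset.Icc_eq_empty (by omega), Finset.prod_empty]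
    ring
  | succ j hj ih =>
    obtain ⟨k, rfl⟩ : ∃ k, j = k + 1 := ⟨j - 1, by omega⟩
    have ih := ih (by omega)
    simp only [Nat.add_sub_cancel] at ih ⊢
    have hk0 : 1 ≤ k := by omega
    have hs : σ (k + 1) = σ k + γ (k + 1) := by
      rw [hσ (k + 1) (by omega) (by omega), hσ k (by omega) (by omega),
        Finset.sum_Icc_succ_top (by omega)]
    have hp : ∏ i ∈ Finset.Icc m (k + 1), (2 * (i : ℝ)) / (2 * (i : ℝ) + 1)
        = (∏ i ∈ Finset.Icc m k, (2 * (i : ℝ)) / (2 * (i : ℝ) + 1)) *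
          ((2 * ((k : ℝ) + 1)) / (2 * ((k : ℝ) + 1) + 1)) := by
      rw [Finset.prod_Icc_succ_top (by omega)]
      push_cast
      ring
    rw [hs, hγ (k + 1) (by omega) (by omega), hp]
    set P := ∏ i ∈ Finset.Icc m k, (2 * (i : ℝ)) / (2 * (i : ℝ) + 1) with hP
    have hk : (k : ℝ) ≥ 1 := by exact_mod_cast hk0
    have hkne : (k : ℝ) ≠ 0 := by linarith
    have hk1ne : (k : ℝ) + 1 ≠ 0 := by linarith
    have h2k : 2 * ((k : ℝ) + 1) + 1 ≠ 0 := by linarith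
    have hk1' : (k : ℝ) + 1 - 1 ≠ 0 := by linarith
    push_cast at ih ⊢
    field_simp at ih ⊢
    linear_combination ((k:ℝ)+1)*(2*(k:ℝ)+3) * ih
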